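/- Let X_1, X_2, …, X_T be independent square-integrable real random variables, each with variance σ². Let κ ≥ 1, let 0 = t_0 < t_1 < ⋯ < t_κ ≤ T be integers, let w_1,…,w_κ ∈ ℝ, and for t ∈ [T] let X̄^{(t)} = (1/t)∑_{i=1}^t X_i denote the running sample mean. Then Var( ∑_{j=1}^κ w_j X̄^{(t_j)} ) = σ² ∑_{i=1}^κ (t_i − t_{i−1}) ( ∑_{j=i}^κ w_j/t_j )². -/

import Mathlib

open MeasureTheory ProbabilityTheory Finset

/-- Variance of a linear statistic of running sample means of an independent data stream. -/
theorem variance_linear_statistic_running_means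
    (Ω : Type*) [MeasurableSpace Ω] (P : Measure Ω) [IsProbabilityMeasure P]
    (T : ℕ) (hT : 1 ≤ T) (X : ℕ → Ω → ℝ) (σ2 : ℝ)
    (hindep : iIndepFun X P)
    (hmem : ∀ i, MemLp (X i) 2 P)
    (hvar : ∀ i, variance (X i) P = σ2)
    (κ : ℕ) (hκ : 1 ≤ κ) (t : ℕ → ℕ) (ht0 : t 0 = 0)
    (hmono : ∀ i < κ, t i < t (i + 1)) (htT : t κ ≤ T)
    (w : ℕ → ℝ) :
    variance (fun ω => ∑ j ∈ Icc 1 κ,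
        w j * ((1 / (t j : ℝ)) * ∑ i ∈ range (t j), X i ω)) P
      = σ2 * ∑ i ∈ Icc 1 κ,
          ((t i : ℝ) - (t (i - 1) : ℝ)) * (∑ j ∈ Icc i κ, w j / (t j : ℝ)) ^ 2 := by
  classical
  -- monotonicity of t on [0, κ]
  have hmono' : ∀ b, b ≤ κ → ∀ a, a ≤ b → t a ≤ t b := by
    intro b
    induction b with
    | zero => intro _ a ha; simp [Nat.le_zero.mp ha]
    | succ n ih =>
      intro hn a ha
      rcases Nat.lt_or_ge a (n + 1) with h | h
      · exact le_trans (ih (by omega) a (by omega)) (hmono n (by omega)).le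
      · have : a = n + 1 := by omega
        simp [this]
  set c : ℕ → ℝ := fun i => ∑ j ∈ (Icc 1 κ).filter (fun j => i < t j), w j / (t j : ℝ)
    with hc
  -- Step A: rewrite the statistic as a linear combination of the X i
  have hA : (fun ω => ∑ j ∈ Icc 1 κ, w j * ((1 / (t j : ℝ)) * ∑ i ∈ range (t j), X i ω))
      = fun ω => ∑ i ∈ range (t κ), c i * X i ω := by
    funext ω
    have h1 : ∀ j ∈ Icc 1 κ, w j * ((1 / (t j : ℝ)) * ∑ i ∈ range (t j), X i ω)
        = ∑ i ∈ range (t κ), if i < t j then w j / (t j : ℝ) * X i ω else 0 := by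
      intro j hj
      have hjκ : t j ≤ t κ := hmono' κ le_rfl j (mem_Icc.mp hj).2
      have hfil : (range (t κ)).filter (fun i => i < t j) = range (t j) := by
        ext i; simp only [mem_filter, mem_range]; omega
      rw [← Finset.sum_filter, hfil, ← Finset.mul_sum]
      ring
    rw [Finset.sum_congr rfl h1, Finset.sum_comm]
    refine Finset.sum_congr rfl fun i _ => ?_
    calc ∑ j ∈ Icc 1 κ, (if i < t j then w j / (t j : ℝ) * X i ω else 0)
        = ∑ j ∈ (Icc 1 κ).filter (fun j => i < t j), w j / (t j : ℝ) * X i ω :=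
          (Finset.sum_filter _ _).symm
      _ = c i * X i ω := (Finset.sum_mul _ _ _).symm
  rw [hA]
  -- Step B: variance of the linear combination
  have hfun : (fun ω => ∑ i ∈ range (t κ), c i * X i ω)
      = ∑ i ∈ range (t κ), (fun ω => c i * X i ω) := by
    funext ω; simp
  have hB : variance (fun ω => ∑ i ∈ range (t κ), c i * X i ω) P
      = ∑ i ∈ range (t κ), c i ^ 2 * σ2 := by
    rw [hfun, IndepFun.variance_sum (fun i _ => (hmem i).const_mul (c i))
      (fun i _ j _ hij => by
        exact (hindep.indepFun hij).comp (measurable_const_mul (c i))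
          (measurable_const_mul (c j)))]
    exact Finset.sum_congr rfl fun i _ => by rw [variance_const_mul, hvar]
  rw [hB]
  -- Step C: regroup the sum of squared coefficients by blocks
  have hunion : range (t κ) = (Icc 1 κ).biUnion (fun k => Ico (t (k - 1)) (t k)) := by
    ext i
    simp only [mem_range, mem_biUnion, mem_Icc, mem_Ico]
    constructor
    · intro hi
      have hex : ∃ k, i < t k := ⟨κ, hi⟩
      set k := Nat.find hex with hk
      have hik : i < t k := Nat.find_spec hex
      have hk1 : 1 ≤ k := by
        rcases Nat.eq_zero_or_pos k with h | h
        · exfalso; rw [h, ht0] at hik; omega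
        · exact h
      have hkκ : k ≤ κ := Nat.find_min' hex hi
      have hlow : t (k - 1) ≤ i := by
        have := Nat.find_min hex (show k - 1 < k by omega)
        omega
      exact ⟨k, ⟨hk1, hkκ⟩, hlow, hik⟩
    · rintro ⟨k, ⟨hk1, hkκ⟩, _, h2⟩
      exact lt_of_lt_of_le h2 (hmono' κ le_rfl k hkκ)
  have key : ∀ a b, a ≤ κ → b ≤ κ → a < b →
      Disjoint (Ico (t (a - 1)) (t a)) (Ico (t (b - 1)) (t b)) := by
    intro a b ha hb hab
    have : t a ≤ t (b - 1) := hmono' (b - 1) (by omega) a (by omega)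
    refine Finset.disjoint_left.mpr fun i hi hi' => ?_
    simp only [mem_Ico] at hi hi'
    omega
  have hdisj : (↑(Icc 1 κ) : Set ℕ).PairwiseDisjoint (fun k => Ico (t (k - 1)) (t k)) := by
    intro a ha b hb hab
    simp only [coe_Icc, Set.mem_Icc] at ha hb
    rcases lt_or_gt_of_ne hab with h | h
    · exact key a b ha.2 hb.2 h
    · exact (key b a hb.2 ha.2 h).symm
  rw [hunion, Finset.sum_biUnion hdisj]
  rw [mul_comm σ2, Finset.sum_mul]
  refine Finset.sum_congr rfl fun k hk => ?_
  obtain ⟨hk1, hkκ⟩ := mem_Icc.mp hk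
  have hcc : ∀ i ∈ Ico (t (k - 1)) (t k), c i = ∑ j ∈ Icc k κ, w j / (t j : ℝ) := by
    intro i hi
    obtain ⟨hlow, hhigh⟩ := mem_Ico.mp hi
    have hfil : (Icc 1 κ).filter (fun j => i < t j) = Icc k κ := by
      ext j
      simp only [mem_filter, mem_Icc]
      constructor
      · rintro ⟨⟨hj1, hjκ⟩, hij⟩
        refine ⟨?_, hjκ⟩
        by_contra h
        have : t j ≤ t (k - 1) := hmono' (k - 1) (by omega) j (by omega)
        omega
      · rintro ⟨hkj, hjκ⟩
        have : t k ≤ t j := hmono' j (by omega) k hkj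
        exact ⟨⟨by omega, hjκ⟩, by omega⟩
    rw [hc]
    simp only [hfil]
  have hle : t (k - 1) ≤ t k := hmono' k hkκ (k - 1) (by omega)
  calc ∑ i ∈ Ico (t (k - 1)) (t k), c i ^ 2 * σ2
      = ∑ _i ∈ Ico (t (k - 1)) (t k), (∑ j ∈ Icc k κ, w j / (t j : ℝ)) ^ 2 * σ2 :=
        Finset.sum_congr rfl fun i hi => by rw [hcc i hi]
    _ = ((t k - t (k - 1) : ℕ) : ℝ) * ((∑ j ∈ Icc k κ, w j / (t j : ℝ)) ^ 2 * σ2) := by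
        rw [Finset.sum_const, Nat.card_Ico, nsmul_eq_mul]
    _ = ((t k : ℝ) - (t (k - 1) : ℝ)) * (∑ j ∈ Icc k κ, w j / (t j : ℝ)) ^ 2 * σ2 := by
        rw [Nat.cast_sub hle]; ring
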